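/- Suppose δ ∈ ℝ^n with n ≥ 2, δᵀ1 = 0, and δ ≠ 0. Then there is a set S of ordered pairs (i,j), 1 ≤ i,j ≤ n, and positive reals η_{ij} with Σ_{(i,j)∈S} η_{ij} = ‖δ‖₁, such that δ = Σ_{(i,j)∈S} (η_{ij}/2)·(e_i − e_j), where e_i is the i-th standard basis vector. -/

import Mathlib

/-- Any nonzero mean-zero vector `δ ∈ ℝⁿ` decomposes as a positive combination
`δ = Σ_{(i,j)∈S} (η_{ij}/2)(e_i - e_j)` with `Σ η_{ij} = ‖δ‖₁`. -/
theorem stmt13 {n : ℕ} (hn : 2 ≤ n) (δ : Fin n → ℝ)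
    (hsum : ∑ i, δ i = 0) (hne : δ ≠ 0) :
    ∃ (S : Finset (Fin n × Fin n)) (η : Fin n × Fin n → ℝ),
      (∀ p ∈ S, 0 < η p) ∧
      (∑ p ∈ S, η p) = ∑ i, |δ i| ∧
      ∀ k, δ k = ∑ p ∈ S,
        η p / 2 * ((if p.1 = k then (1 : ℝ) else 0) - (if p.2 = k then (1 : ℝ) else 0)) := by
  classical
  set P : Finset (Fin n) := Finset.univ.filter (fun i => 0 < δ i) with hP
  set N : Finset (Fin n) := Finset.univ.filter (fun i => δ i < 0) with hN
  set T : ℝ := ∑ i ∈ P, δ i with hT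
  have hex : ∃ i, 0 < δ i := by
    by_contra h
    push_neg at h
    exact hne (funext fun i =>
      (Finset.sum_eq_zero_iff_of_nonpos (fun i _ => h i)).mp hsum i (Finset.mem_univ i))
  have hTpos : 0 < T := by
    obtain ⟨i, hi⟩ := hex
    exact Finset.sum_pos' (fun j hj => le_of_lt (Finset.mem_filter.mp hj).2)
      ⟨i, by simp [hP, hi], hi⟩
  have hsplit : T + ∑ i ∈ Finset.univ.filter (fun i => ¬ 0 < δ i), δ i = 0 := by
    rw [hT, hP, Finset.sum_filter_add_sum_filter_not]; exact hsum
  have hzero : ∑ i ∈ Finset.univ.filter (fun i => ¬ 0 < δ i), δ i = ∑ j ∈ N, δ j := by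
    symm
    apply Finset.sum_subset
    · intro j hj
      simp only [hN, Finset.mem_filter, Finset.mem_univ, true_and] at hj ⊢
      linarith
    · intro i hi hni
      simp only [hN, Finset.mem_filter, Finset.mem_univ, true_and, not_lt] at hi hni
      linarith
  have hNsum : ∑ j ∈ N, (-δ j) = T := by
    rw [Finset.sum_neg_distrib]
    linarith [hsplit, hzero]
  have habs : ∑ i, |δ i| = T + T := by
    rw [← Finset.sum_filter_add_sum_filter_not Finset.univ (fun i => 0 < δ i) (fun i => |δ i|)]
    have h1 : ∑ i ∈ P, |δ i| = T := by
      rw [hT]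
      exact Finset.sum_congr rfl fun i hi => abs_of_pos (Finset.mem_filter.mp hi).2
    have h2 : ∑ i ∈ Finset.univ.filter (fun i => ¬ 0 < δ i), |δ i| = T := by
      have : ∑ i ∈ Finset.univ.filter (fun i => ¬ 0 < δ i), |δ i|
          = ∑ i ∈ Finset.univ.filter (fun i => ¬ 0 < δ i), (-δ i) := by
        refine Finset.sum_congr rfl fun i hi => ?_
        simp only [Finset.mem_filter, Finset.mem_univ, true_and, not_lt] at hi
        exact abs_of_nonpos hi
      rw [this, Finset.sum_neg_distrib]
      linarith [hsplit]
    rw [h1, h2]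
  refine ⟨P ×ˢ N, fun p => 2 * (δ p.1 * (-δ p.2)) / T, ?_, ?_, ?_⟩
  · rintro ⟨i, j⟩ hp
    rw [Finset.mem_product] at hp
    have hi := (Finset.mem_filter.mp hp.1).2
    have hj := (Finset.mem_filter.mp hp.2).2
    apply div_pos _ hTpos
    nlinarith
  · rw [Finset.sum_product]
    have inner : ∀ i, ∑ j ∈ N, 2 * (δ i * (-δ j)) / T = 2 * δ i := by
      intro i
      rw [← Finset.sum_div]
      rw [show ∑ j ∈ N, 2 * (δ i * (-δ j)) = 2 * δ i * ∑ j ∈ N, (-δ j) by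
        rw [Finset.mul_sum]; exact Finset.sum_congr rfl fun j _ => by ring]
      rw [hNsum]
      field_simp
    rw [Finset.sum_congr rfl fun i _ => inner i]
    rw [← Finset.mul_sum, ← hT, habs]
    ring
  · intro k
    rw [Finset.sum_product]
    have inner : ∀ i, ∑ j ∈ N,
        (2 * (δ i * (-δ j)) / T) / 2 * ((if i = k then (1:ℝ) else 0) - (if j = k then (1:ℝ) else 0))
        = δ i / T * ((if i = k then (1:ℝ) else 0) * T - (if k ∈ N then -δ k else 0)) := by
      intro i
      have step : ∀ j ∈ N,
          (2 * (δ i * (-δ j)) / T) / 2 * ((if i = k then (1:ℝ) else 0) - (if j = k then (1:ℝ) else 0))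
          = δ i / T * ((if i = k then (1:ℝ) else 0) * (-δ j) - (if j = k then -δ j else 0)) := by
        intro j _
        by_cases h1 : i = k <;> by_cases h2 : j = k <;> simp [h1, h2] <;> ring
      rw [Finset.sum_congr rfl step, ← Finset.mul_sum]
      congr 1
      rw [Finset.sum_sub_distrib, ← Finset.mul_sum, hNsum, Finset.sum_ite_eq' N k (fun j => -δ j)]
    rw [Finset.sum_congr rfl fun i _ => inner i]
    have outer : ∑ i ∈ P, δ i / T * ((if i = k then (1:ℝ) else 0) * T - (if k ∈ N then -δ k else 0))
        = (if k ∈ P then δ k else 0) - (if k ∈ N then -δ k else 0) := by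
      have step : ∀ i ∈ P, δ i / T * ((if i = k then (1:ℝ) else 0) * T - (if k ∈ N then -δ k else 0))
          = (if i = k then δ i else 0) - δ i / T * (if k ∈ N then -δ k else 0) := by
        intro i _
        rw [mul_sub]
        congr 1
        by_cases h1 : i = k
        · simp only [h1, if_pos rfl, ↓reduceIte]
          field_simp
        · simp [h1]
      rw [Finset.sum_congr rfl step, Finset.sum_sub_distrib,
        Finset.sum_ite_eq' P k δ]
      congr 1
      rw [← Finset.sum_mul, ← Finset.sum_div, ← hT]
      field_simp
    rw [outer]
    rcases lt_trichotomy (δ k) 0 with hk | hk | hk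
    · have : k ∉ P := by simp [hP]; linarith
      have : k ∈ N := by simp [hN, hk]
      simp_all
    · have : k ∉ P := by simp [hP, hk]
      have : k ∉ N := by simp [hN, hk]
      simp_all
    · have : k ∈ P := by simp [hP, hk]
      have : k ∉ N := by simp [hN]; linarith
      simp_all [not_lt.mpr hk.le]
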